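/- Let σ^E, σ^I, γ^E, γ^I ∈ (0,1) and φ ≥ 0, and let F = [[0, σ^E φ],[0, 0]], T = [[σ^E(1−γ^E), 0],[σ^I γ^E, σ^I(1−γ^I)]], and R₀ = σ^E σ^I γ^E φ / ((1 − σ^E(1−γ^E))(1 − σ^I(1−γ^I))). Then the spectral radius of T is less than 1, and the spectral radius of F + T is < 1 if and only if R₀ < 1, and is > 1 if and only if R₀ > 1. -/

import Mathlib

open scoped ENNReal

lemma spec2 (M : Matrix (Fin 2) (Fin 2) ℂ) (μ : ℂ) :
    μ ∈ spectrum ℂ M ↔ (μ - M 0 0) * (μ - M 1 1) - M 0 1 * M 1 0 = 0 := by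
  rw [spectrum.mem_iff, Matrix.isUnit_iff_isUnit_det, isUnit_iff_ne_zero, not_ne_iff,
    Matrix.det_fin_two]
  simp [Matrix.algebraMap_matrix_apply, Matrix.sub_apply]

lemma sr2 (a b c d : ℝ) (ha : 0 ≤ a) (hd : 0 ≤ d) (hbc : 0 ≤ b * c) :
    spectralRadius ℂ ((Matrix.of ![![a,b],![c,d]]).map (algebraMap ℝ ℂ)) =
      ENNReal.ofReal ((a + d + Real.sqrt ((a-d)^2 + 4*(b*c)))/2) := by
  set s := Real.sqrt ((a-d)^2 + 4*(b*c)) with hs_def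
  have hs0 : 0 ≤ s := Real.sqrt_nonneg _
  have hs : s^2 = (a-d)^2 + 4*(b*c) := Real.sq_sqrt (by positivity)
  set p := (a + d + s)/2 with hp_def
  set m := (a + d - s)/2 with hm_def
  have hsum : p + m = a + d := by rw [hp_def, hm_def]; ring
  have hprod : p * m = a*d - b*c := by rw [hp_def, hm_def]; nlinarith [hs]
  have hspec : spectrum ℂ ((Matrix.of ![![a,b],![c,d]]).map (algebraMap ℝ ℂ))
      = {(p:ℂ), (m:ℂ)} := by
    ext μ
    rw [spec2]
    have e00 : ((Matrix.of ![![a,b],![c,d]]).map (algebraMap ℝ ℂ)) 0 0 = (a:ℂ) := rfl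
    have e01 : ((Matrix.of ![![a,b],![c,d]]).map (algebraMap ℝ ℂ)) 0 1 = (b:ℂ) := rfl
    have e10 : ((Matrix.of ![![a,b],![c,d]]).map (algebraMap ℝ ℂ)) 1 0 = (c:ℂ) := rfl
    have e11 : ((Matrix.of ![![a,b],![c,d]]).map (algebraMap ℝ ℂ)) 1 1 = (d:ℂ) := rfl
    rw [e00, e01, e10, e11]
    have h1 : (p:ℂ) + m = (a:ℂ) + d := by exact_mod_cast congrArg Complex.ofReal hsum
    have h2 : (p:ℂ) * m = (a:ℂ)*d - (b:ℂ)*c := by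
      have := congrArg Complex.ofReal hprod; push_cast at this; exact_mod_cast this
    have key : (μ - (a:ℂ)) * (μ - d) - b*c = (μ - p) * (μ - m) := by
      linear_combination μ * h1 - h2
    rw [key, mul_eq_zero, sub_eq_zero, sub_eq_zero]
    simp [Set.mem_insert_iff, Set.mem_singleton_iff]
  have hmp : |m| ≤ p := by
    rw [abs_le]
    constructor
    · rw [hp_def, hm_def]; nlinarith
    · rw [hp_def, hm_def]; nlinarith
  have hp0 : 0 ≤ p := le_trans (abs_nonneg m) hmp
  rw [spectralRadius, hspec, iSup_pair]
  have hnp : (‖(p:ℂ)‖₊ : ℝ≥0∞) = ENNReal.ofReal p := by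
    rw [← enorm_eq_nnnorm, ← ofReal_norm, Complex.norm_real, Real.norm_eq_abs, abs_of_nonneg hp0]
  have hnm : (‖(m:ℂ)‖₊ : ℝ≥0∞) ≤ ENNReal.ofReal p := by
    rw [← enorm_eq_nnnorm, ← ofReal_norm, Complex.norm_real, Real.norm_eq_abs]
    exact ENNReal.ofReal_le_ofReal hmp
  rw [hnp]
  exact sup_eq_left.mpr hnm

/-- `ρ(T) < 1`, and the spectral radius of `F + T` is below (resp. above)
one exactly when the basic reproduction number `R₀` is below (resp. above) one. -/
theorem spectral_radius_F_add_T_vs_R0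
    (σE σI γE γI φ : ℝ)
    (hσE : σE ∈ Set.Ioo (0:ℝ) 1) (hσI : σI ∈ Set.Ioo (0:ℝ) 1)
    (hγE : γE ∈ Set.Ioo (0:ℝ) 1) (hγI : γI ∈ Set.Ioo (0:ℝ) 1)
    (hφ : 0 ≤ φ)
    (F T : Matrix (Fin 2) (Fin 2) ℝ)
    (hF : F = Matrix.of ![![0, σE * φ], ![0, 0]])
    (hT : T = Matrix.of ![![σE * (1 - γE), 0], ![σI * γE, σI * (1 - γI)]])
    (R0 : ℝ)
    (hR0 : R0 = σE * σI * γE * φ /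
        ((1 - σE * (1 - γE)) * (1 - σI * (1 - γI)))) :
    spectralRadius ℂ (T.map (algebraMap ℝ ℂ)) < 1 ∧
    (spectralRadius ℂ ((F + T).map (algebraMap ℝ ℂ)) < 1 ↔ R0 < 1) ∧
    (1 < spectralRadius ℂ ((F + T).map (algebraMap ℝ ℂ)) ↔ 1 < R0) := by
  obtain ⟨hσE0, hσE1⟩ := hσE
  obtain ⟨hσI0, hσI1⟩ := hσI
  obtain ⟨hγE0, hγE1⟩ := hγE
  obtain ⟨hγI0, hγI1⟩ := hγI
  set a := σE * (1 - γE) with ha_def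
  set b := σE * φ with hb_def
  set c := σI * γE with hc_def
  set d := σI * (1 - γI) with hd_def
  have ha0 : 0 < a := by rw [ha_def]; nlinarith
  have ha1 : a < 1 := by rw [ha_def]; nlinarith
  have hd0 : 0 < d := by rw [hd_def]; nlinarith
  have hd1 : d < 1 := by rw [hd_def]; nlinarith
  have hb0 : 0 ≤ b := by rw [hb_def]; positivity
  have hc0 : 0 ≤ c := by rw [hc_def]; positivity
  have hR0' : R0 = b * c / ((1 - a) * (1 - d)) := by
    rw [hR0, ha_def, hb_def, hc_def, hd_def]; ring_nf
  have hT' : T = Matrix.of ![![a, 0], ![c, d]] := hT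
  have hFT : F + T = Matrix.of ![![a, b], ![c, d]] := by
    subst hF hT
    ext i j
    fin_cases i <;> fin_cases j <;>
      simp [Matrix.add_apply, ha_def, hb_def, hc_def, hd_def]
  clear_value a b c d
  clear hR0 hT hF ha_def hb_def hc_def hd_def
  have hbc : 0 ≤ b * c := mul_nonneg hb0 hc0
  have hden : 0 < (1 - a) * (1 - d) := by nlinarith
  have hρT : spectralRadius ℂ (T.map (algebraMap ℝ ℂ)) =
      ENNReal.ofReal ((a + d + Real.sqrt ((a-d)^2 + 4*(0*c)))/2) := by
    rw [hT']; exact sr2 a 0 c d ha0.le hd0.le (by simp)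
  have hρT1 : spectralRadius ℂ (T.map (algebraMap ℝ ℂ)) < 1 := by
    rw [hρT, zero_mul, mul_zero, add_zero, Real.sqrt_sq_eq_abs, ENNReal.ofReal_lt_one]
    rcases abs_cases (a - d) with ⟨h, _⟩ | ⟨h, _⟩ <;> rw [h] <;> linarith
  set s := Real.sqrt ((a-d)^2 + 4*(b*c)) with hs_def
  have hs0 : 0 ≤ s := Real.sqrt_nonneg _
  have hρFT : spectralRadius ℂ ((F + T).map (algebraMap ℝ ℂ)) =
      ENNReal.ofReal ((a + d + s)/2) := by
    rw [hFT]; exact sr2 a b c d ha0.le hd0.le hbc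
  have hy : 0 < 2 - (a + d) := by linarith
  have key1 : (a + d + s)/2 < 1 ↔ b * c < (1 - a) * (1 - d) := by
    rw [div_lt_one (by norm_num : (0:ℝ) < 2)]
    constructor
    · intro h
      have hs2 : s < 2 - (a + d) := by linarith
      have h3 := (Real.sqrt_lt' hy).mp (hs_def ▸ hs2)
      nlinarith
    · intro h
      have h2 : (a-d)^2 + 4*(b*c) < (2 - (a+d))^2 := by nlinarith
      have h3 := (Real.sqrt_lt' hy).mpr h2
      rw [← hs_def] at h3
      linarith
  have key2 : 1 < (a + d + s)/2 ↔ (1 - a) * (1 - d) < b * c := by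
    rw [lt_div_iff₀ (by norm_num : (0:ℝ) < 2)]
    constructor
    · intro h
      have hs2 : 2 - (a + d) < s := by linarith
      have h3 := (Real.lt_sqrt hy.le).mp (hs_def ▸ hs2)
      nlinarith
    · intro h
      have h2 : (2 - (a+d))^2 < (a-d)^2 + 4*(b*c) := by nlinarith
      have h3 := (Real.lt_sqrt hy.le).mpr h2
      rw [← hs_def] at h3
      linarith
  refine ⟨hρT1, ?_, ?_⟩
  · rw [hρFT, ENNReal.ofReal_lt_one, key1, hR0', div_lt_one hden]
  · rw [hρFT, ENNReal.one_lt_ofReal, key2, hR0', one_lt_div hden]
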